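/- Let V^* be the optimal value function of a γ-discounted MDP derived from a weakly communicating average-reward MDP with optimal gain ρ* and bias h*. For any policy π, horizon T, and initial state s̃, the accumulated variance of V* along the occupancy measure satisfies Σ_{s,a} d_T^π(s,a|s̃)·V(P_{s,a}, V*) ≤ 8·sp(h*)² + 4·sp(h*)·T·ρ* + 4·sp(h*)²·T·(1-γ). -/

import Mathlib

open Finset

section Aux

lemma probSum_le {S : Type*} [Fintype S] {p f : S → ℝ} {c : ℝ}
    (hp : ∀ s, 0 ≤ p s) (hp1 : ∑ s, p s = 1) (hf : ∀ s, f s ≤ c) :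
    ∑ s, p s * f s ≤ c := by
  calc ∑ s, p s * f s ≤ ∑ s, p s * c :=
        Finset.sum_le_sum fun s _ => mul_le_mul_of_nonneg_left (hf s) (hp s)
    _ = c := by rw [← Finset.sum_mul, hp1, one_mul]

lemma probSum_ge {S : Type*} [Fintype S] {p f : S → ℝ} {c : ℝ}
    (hp : ∀ s, 0 ≤ p s) (hp1 : ∑ s, p s = 1) (hf : ∀ s, c ≤ f s) :
    c ≤ ∑ s, p s * f s := by
  calc c = ∑ s, p s * c := by rw [← Finset.sum_mul, hp1, one_mul]
    _ ≤ ∑ s, p s * f s :=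
        Finset.sum_le_sum fun s _ => mul_le_mul_of_nonneg_left (hf s) (hp s)

lemma sum_comm3 {α β δ : Type*} [Fintype α] [Fintype β] [Fintype δ]
    (F : α → β → δ → ℝ) :
    ∑ x, ∑ s, ∑ a, F x s a = ∑ s, ∑ a, ∑ x, F x s a := by
  rw [Finset.sum_comm]
  exact Finset.sum_congr rfl fun s _ => Finset.sum_comm

lemma telesc (F : ℕ → ℝ) (T : ℕ) :
    ∑ t ∈ Icc 1 T, (F (t + 1) - F t) = F (T + 1) - F 1 := by
  induction T with
  | zero => simp
  | succ n ih =>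
    rw [← Finset.Ico_add_one_right_eq_Icc] at ih ⊢
    rw [Finset.sum_Ico_succ_top (by omega), ih]; ring

lemma var_key (sp c L Vs Q : ℝ) (hsp : 0 ≤ sp) (hc : 0 ≤ c)
    (hVlo : L ≤ Vs) (hVhi : Vs ≤ L + 2 * sp)
    (hQlo : L ≤ Q) (hQhi : Q ≤ L + 2 * sp)
    (hx : -c ≤ Vs - Q) :
    (Vs - L) ^ 2 - (Q - L) ^ 2 ≤ 4 * sp * (Vs - Q) + 4 * sp * c := by
  nlinarith [mul_nonneg (by linarith : (0:ℝ) ≤ (Vs - Q) + c)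
      (by linarith : (0:ℝ) ≤ 4 * sp - ((Vs - L) + (Q - L))),
    mul_nonneg hc (by linarith : (0:ℝ) ≤ (Vs - L) + (Q - L))]

end Aux

set_option maxHeartbeats 2000000

/-- Accumulated variance of the optimal discounted value function along any policy's
horizon-`T` occupancy measure:
`Σ_{s,a} d_T^π(s,a|st) 𝕍(P_{s,a}, V*) ≤ 8 sp(h*)² + 4 sp(h*) T ρ* + 4 sp(h*)² T (1-γ)`. -/
theorem stmt17 {S A : Type*} [Fintype S] [Fintype A] [DecidableEq S]
    [Nonempty S] [Nonempty A]
    (P : S → A → S → ℝ) (r : S → A → ℝ)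
    (hP0 : ∀ s a s', 0 ≤ P s a s') (hP1 : ∀ s a, ∑ s', P s a s' = 1)
    (hr0 : ∀ s a, 0 ≤ r s a) (hr1 : ∀ s a, r s a ≤ 1)
    (γ : ℝ) (hγ0 : 0 ≤ γ) (hγ1 : γ < 1)
    (ρ : ℝ) (h : S → ℝ)
    (hBellAvg : ∀ s, ρ + h s =
      univ.sup' univ_nonempty (fun a => r s a + ∑ s', P s a s' * h s'))
    (Vstar : S → ℝ)
    (hVstar : ∀ s, Vstar s =
      univ.sup' univ_nonempty (fun a => r s a + γ * ∑ s', P s a s' * Vstar s'))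
    (π : S → A → ℝ) (hπ0 : ∀ s a, 0 ≤ π s a) (hπ1 : ∀ s, ∑ a, π s a = 1)
    (st : S) (ν : ℕ → S → A → ℝ)
    (hν1 : ∀ s a, ν 1 s a = if s = st then π s a else 0)
    (hνrec : ∀ t, 1 ≤ t → ∀ s a,
      ν (t + 1) s a = π s a * ∑ s', ∑ a', ν t s' a' * P s' a' s)
    (T : ℕ) (hT : 1 ≤ T) :
    ∑ s, ∑ a, (∑ t ∈ Icc 1 T, ν t s a) *
        ((∑ s', P s a s' * Vstar s' ^ 2) - (∑ s', P s a s' * Vstar s') ^ 2)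
      ≤ 8 * (univ.sup' univ_nonempty h - univ.inf' univ_nonempty h) ^ 2
        + 4 * (univ.sup' univ_nonempty h - univ.inf' univ_nonempty h) * T * ρ
        + 4 * (univ.sup' univ_nonempty h - univ.inf' univ_nonempty h) ^ 2
          * T * (1 - γ) := by
  have hγ' : 0 < 1 - γ := by linarith
  obtain ⟨m, hm⟩ : ∃ x, univ.inf' univ_nonempty h = x := ⟨_, rfl⟩
  rw [hm]
  obtain ⟨sp, hsp⟩ : ∃ x, univ.sup' univ_nonempty h - m = x := ⟨_, rfl⟩
  rw [hsp]
  have hhm : ∀ s, m ≤ h s := fun s => hm ▸ Finset.inf'_le _ (mem_univ s)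
  have hhM : ∀ s, h s - m ≤ sp := fun s => by
    have h1 : h s ≤ univ.sup' univ_nonempty h := Finset.le_sup' h (mem_univ s)
    linarith [hsp]
  obtain ⟨smin, -, hsmin⟩ := Finset.exists_mem_eq_inf' (univ_nonempty (α := S)) h
  have hsp0 : 0 ≤ sp := by
    have h1 := hhM smin
    rw [hm] at hsmin
    linarith
  -- Bellman inequalities
  have hBle : ∀ s a, r s a + ∑ s', P s a s' * h s' ≤ ρ + h s := fun s a => by
    rw [hBellAvg s]
    exact Finset.le_sup' (fun a => r s a + ∑ s', P s a s' * h s') (mem_univ a)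
  have hBex : ∀ s, ∃ a, ρ + h s = r s a + ∑ s', P s a s' * h s' := fun s => by
    obtain ⟨a, -, ha⟩ := Finset.exists_mem_eq_sup' (univ_nonempty (α := A))
      (fun a => r s a + ∑ s', P s a s' * h s')
    exact ⟨a, (hBellAvg s).trans ha⟩
  have hVle : ∀ s a, r s a + γ * ∑ s', P s a s' * Vstar s' ≤ Vstar s := fun s a => by
    rw [hVstar s]
    exact Finset.le_sup' (fun a => r s a + γ * ∑ s', P s a s' * Vstar s') (mem_univ a)
  have hVex : ∀ s, ∃ a, Vstar s = r s a + γ * ∑ s', P s a s' * Vstar s' := fun s => by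
    obtain ⟨a, -, ha⟩ := Finset.exists_mem_eq_sup' (univ_nonempty (α := A))
      (fun a => r s a + γ * ∑ s', P s a s' * Vstar s')
    exact ⟨a, (hVstar s).trans ha⟩
  -- ρ ≥ 0
  have hρ0 : 0 ≤ ρ := by
    obtain ⟨a, ha⟩ := hBex smin
    have h1 : m ≤ ∑ s', P smin a s' * h s' :=
      probSum_ge (hP0 smin a) (hP1 smin a) hhm
    rw [hm] at hsmin
    have := hr0 smin a
    linarith
  have hdiv : ρ + γ * (ρ / (1 - γ)) = ρ / (1 - γ) := by
    field_simp
    ring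
  -- upper bound : Vstar ≤ ρ/(1-γ) + (h - m)
  have hUup : ∀ s, Vstar s ≤ ρ / (1 - γ) + (h s - m) := by
    obtain ⟨s0, -, hs0⟩ := Finset.exists_max_image univ
      (fun s => Vstar s - (ρ / (1 - γ) + (h s - m))) univ_nonempty
    simp only [mem_univ, forall_const] at hs0
    have key : Vstar s0 - (ρ / (1 - γ) + (h s0 - m)) ≤ 0 := by
      obtain ⟨a, ha⟩ := hVex s0
      obtain ⟨e, hedef⟩ : ∃ x, Vstar s0 - (ρ / (1 - γ) + (h s0 - m)) = x := ⟨_, rfl⟩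
      rw [hedef]
      have hKsum : ∑ s', P s0 a s' * (h s' + (ρ / (1 - γ) - m + e)) =
          (∑ s', P s0 a s' * h s') + (ρ / (1 - γ) - m + e) := by
        have expand : ∀ s', P s0 a s' * (h s' + (ρ / (1 - γ) - m + e)) =
            P s0 a s' * h s' + (ρ / (1 - γ) - m + e) * P s0 a s' := fun s' => by ring
        rw [Finset.sum_congr rfl fun s' _ => expand s', Finset.sum_add_distrib,
          ← Finset.mul_sum, hP1, mul_one]
      have hPV : ∑ s', P s0 a s' * Vstar s' ≤ (∑ s', P s0 a s' * h s') +
          (ρ / (1 - γ) - m + e) := by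
        rw [← hKsum]
        refine Finset.sum_le_sum fun s' _ => mul_le_mul_of_nonneg_left ?_ (hP0 s0 a s')
        have h3 := hs0 s'
        rw [hedef] at h3
        linarith
      have hPh0 : m ≤ ∑ s', P s0 a s' * h s' := probSum_ge (hP0 s0 a) (hP1 s0 a) hhm
      have hγPV : γ * ∑ s', P s0 a s' * Vstar s' ≤
          γ * ((∑ s', P s0 a s' * h s') + (ρ / (1 - γ) - m + e)) :=
        mul_le_mul_of_nonneg_left hPV hγ0
      have hble := hBle s0 a
      have h2 : γ * ((∑ s', P s0 a s' * h s') - m) ≤ (∑ s', P s0 a s' * h s') - m := by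
        nlinarith
      have hkey : e ≤ γ * e := by nlinarith [ha, hγPV, hble, hedef]
      nlinarith
    intro s
    have := hs0 s
    linarith
  -- lower bound : Vstar ≥ ρ/(1-γ) + (h - m) - sp
  have hUlo : ∀ s, ρ / (1 - γ) + (h s - m) - sp ≤ Vstar s := by
    obtain ⟨s1, -, hs1⟩ := Finset.exists_min_image univ
      (fun s => Vstar s - (ρ / (1 - γ) + (h s - m))) univ_nonempty
    simp only [mem_univ, forall_const] at hs1
    have key : -sp ≤ Vstar s1 - (ρ / (1 - γ) + (h s1 - m)) := by
      obtain ⟨a, ha⟩ := hBex s1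
      obtain ⟨e, hedef⟩ : ∃ x, Vstar s1 - (ρ / (1 - γ) + (h s1 - m)) = x := ⟨_, rfl⟩
      rw [hedef]
      have hKsum : ∑ s', P s1 a s' * (h s' + (ρ / (1 - γ) - m + e)) =
          (∑ s', P s1 a s' * h s') + (ρ / (1 - γ) - m + e) := by
        have expand : ∀ s', P s1 a s' * (h s' + (ρ / (1 - γ) - m + e)) =
            P s1 a s' * h s' + (ρ / (1 - γ) - m + e) * P s1 a s' := fun s' => by ring
        rw [Finset.sum_congr rfl fun s' _ => expand s', Finset.sum_add_distrib,
          ← Finset.mul_sum, hP1, mul_one]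
      have hPV : (∑ s', P s1 a s' * h s') + (ρ / (1 - γ) - m + e) ≤
          ∑ s', P s1 a s' * Vstar s' := by
        rw [← hKsum]
        refine Finset.sum_le_sum fun s' _ => mul_le_mul_of_nonneg_left ?_ (hP0 s1 a s')
        have h3 := hs1 s'
        rw [hedef] at h3
        linarith
      have hPhM : (∑ s', P s1 a s' * h s') ≤ sp + m :=
        probSum_le (hP0 s1 a) (hP1 s1 a) (fun s' => by have := hhM s'; linarith)
      have hPh0 : m ≤ ∑ s', P s1 a s' * h s' := probSum_ge (hP0 s1 a) (hP1 s1 a) hhm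
      have hγPV : γ * ((∑ s', P s1 a s' * h s') + (ρ / (1 - γ) - m + e)) ≤
          γ * ∑ s', P s1 a s' * Vstar s' := mul_le_mul_of_nonneg_left hPV hγ0
      have hvle := hVle s1 a
      have h2 : ((∑ s', P s1 a s' * h s') - m) - (1 - γ) * sp ≤
          γ * ((∑ s', P s1 a s' * h s') - m) := by nlinarith
      have hkey : -(1 - γ) * sp + γ * e ≤ e := by
        nlinarith [ha, hγPV, hvle, hr0 s1 a, hedef]
      nlinarith
    intro s
    have := hs1 s
    linarith
  -- global bounds on Vstar
  obtain ⟨L, hLdef⟩ : ∃ x, ρ / (1 - γ) - sp = x := ⟨_, rfl⟩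
  have hVlo : ∀ s, L ≤ Vstar s := fun s => by
    have h1 := hUlo s; have h2 := hhm s; linarith
  have hVhi : ∀ s, Vstar s ≤ L + 2 * sp := fun s => by
    have h1 := hUup s; have h2 := hhM s; linarith
  have hL1 : (1 - γ) * (L + 2 * sp) = ρ + (1 - γ) * sp := by
    rw [← hLdef]; field_simp; ring
  -- occupancy measure properties
  have hνnn : ∀ t, 1 ≤ t → ∀ s a, 0 ≤ ν t s a := by
    intro t ht
    induction t, ht using Nat.le_induction with
    | base =>
      intro s a; rw [hν1]
      split_ifs
      · exact hπ0 s a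
      · exact le_refl 0
    | succ t ht ih =>
      intro s a; rw [hνrec t ht]
      exact mul_nonneg (hπ0 s a) (Finset.sum_nonneg fun s' _ =>
        Finset.sum_nonneg fun a' _ => mul_nonneg (ih s' a') (hP0 s' a' s))
  have hmass : ∀ t, 1 ≤ t → ∑ s, ∑ a, ν t s a = 1 := by
    intro t ht
    induction t, ht using Nat.le_induction with
    | base =>
      have h1 : ∀ s, ∑ a, ν 1 s a = if s = st then (1 : ℝ) else 0 := by
        intro s; simp only [hν1]
        split_ifs with hs
        · exact hπ1 s
        · simp
      rw [Finset.sum_congr rfl fun s _ => h1 s]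
      simp
    | succ t ht ih =>
      have h1 : ∀ s, ∑ a, ν (t + 1) s a = ∑ s', ∑ a', ν t s' a' * P s' a' s := by
        intro s; simp only [hνrec t ht]
        rw [← Finset.sum_mul, hπ1, one_mul]
      rw [Finset.sum_congr rfl fun s _ => h1 s,
        sum_comm3 (fun x s' a' => ν t s' a' * P s' a' x)]
      calc ∑ s', ∑ a', ∑ x, ν t s' a' * P s' a' x
          = ∑ s', ∑ a', ν t s' a' := by
            refine Finset.sum_congr rfl fun s' _ => Finset.sum_congr rfl fun a' _ => ?_
            rw [← Finset.mul_sum, hP1, mul_one]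
        _ = 1 := ih
  have hstep : ∀ t, 1 ≤ t → ∀ f : S → ℝ,
      (∑ s, ∑ a, ν t s a * ∑ s', P s a s' * f s') = ∑ s, ∑ a, ν (t + 1) s a * f s := by
    intro t ht f
    have h1 : ∀ s, ∑ a, ν (t + 1) s a * f s =
        (∑ s', ∑ a', ν t s' a' * P s' a' s) * f s := by
      intro s
      rw [← Finset.sum_mul]
      congr 1
      simp only [hνrec t ht]
      rw [← Finset.sum_mul, hπ1, one_mul]
    rw [Finset.sum_congr rfl fun s _ => h1 s]
    have h2 : ∀ x, (∑ s', ∑ a', ν t s' a' * P s' a' x) * f x =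
        ∑ s', ∑ a', ν t s' a' * P s' a' x * f x := by
      intro x; rw [Finset.sum_mul]
      exact Finset.sum_congr rfl fun s' _ => by rw [Finset.sum_mul]
    rw [Finset.sum_congr rfl fun x _ => h2 x,
      sum_comm3 (fun x s' a' => ν t s' a' * P s' a' x * f x)]
    refine Finset.sum_congr rfl fun s _ => Finset.sum_congr rfl fun a _ => ?_
    rw [Finset.mul_sum]
    exact Finset.sum_congr rfl fun x _ => by ring
  -- the centered test function g
  obtain ⟨g, hg⟩ : ∃ gg : S → ℝ, ∀ s,
      gg s = (Vstar s - L) ^ 2 - 4 * sp * (Vstar s - L) :=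
    ⟨fun s => (Vstar s - L) ^ 2 - 4 * sp * (Vstar s - L), fun s => rfl⟩
  have hgle : ∀ s, g s ≤ 0 := fun s => by
    have h1 := hVlo s; have h2 := hVhi s
    rw [hg]; nlinarith
  have hgge : ∀ s, -(4 * sp ^ 2) ≤ g s := fun s => by
    have h1 := hVlo s; have h2 := hVhi s
    rw [hg]; nlinarith [sq_nonneg (Vstar s - L - 2 * sp)]
  obtain ⟨C, hC⟩ : ∃ x, 4 * sp * (ρ + (1 - γ) * sp) = x := ⟨_, rfl⟩
  have hC0 : 0 ≤ C := by
    rw [← hC]; positivity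
  -- pointwise variance bound
  have hpt : ∀ s a, (∑ s', P s a s' * Vstar s' ^ 2) - (∑ s', P s a s' * Vstar s') ^ 2 ≤
      (∑ s', P s a s' * g s') - g s + C := by
    intro s a
    obtain ⟨Q, hQ⟩ : ∃ x, ∑ s', P s a s' * Vstar s' = x := ⟨_, rfl⟩
    rw [hQ]
    have hPg : ∑ s', P s a s' * g s' =
        (∑ s', P s a s' * Vstar s' ^ 2) - 2 * L * Q + L ^ 2 - 4 * sp * (Q - L) := by
      have expand : ∀ s', P s a s' * g s' =
          P s a s' * Vstar s' ^ 2 - (2 * L + 4 * sp) * (P s a s' * Vstar s') +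
            (L ^ 2 + 4 * sp * L) * P s a s' := fun s' => by rw [hg]; ring
      rw [Finset.sum_congr rfl fun s' _ => expand s', Finset.sum_add_distrib,
        Finset.sum_sub_distrib, ← Finset.mul_sum, ← Finset.mul_sum, hP1, mul_one, hQ]
      ring
    have hQlo : L ≤ Q := hQ ▸ probSum_ge (hP0 s a) (hP1 s a) hVlo
    have hQhi : Q ≤ L + 2 * sp := hQ ▸ probSum_le (hP0 s a) (hP1 s a) hVhi
    have hWlo := hVlo s
    have hWhi := hVhi s
    have hx : -(ρ + (1 - γ) * sp) ≤ Vstar s - Q := by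
      have h1 := hVle s a
      rw [hQ] at h1
      have h2 : (1 - γ) * Q ≤ (1 - γ) * (L + 2 * sp) :=
        mul_le_mul_of_nonneg_left hQhi (le_of_lt hγ')
      have h3 := hr0 s a
      linarith only [h1, h2, h3, hL1]
    have hc' : 0 ≤ ρ + (1 - γ) * sp :=
      add_nonneg hρ0 (mul_nonneg hγ'.le hsp0)
    have hvk := var_key sp (ρ + (1 - γ) * sp) L (Vstar s) Q hsp0 hc'
      hWlo hWhi hQlo hQhi hx
    rw [hPg, hg, ← hC]
    linarith only [hvk]
  -- Φ t = expected g at time t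
  obtain ⟨Φ, hΦ⟩ : ∃ F : ℕ → ℝ, ∀ t, F t = ∑ s, ∑ a, ν t s a * g s :=
    ⟨fun t => ∑ s, ∑ a, ν t s a * g s, fun t => rfl⟩
  have hΦT : Φ (T + 1) ≤ 0 := by
    rw [hΦ]
    exact Finset.sum_nonpos fun s _ => Finset.sum_nonpos fun a _ =>
      mul_nonpos_of_nonneg_of_nonpos (hνnn (T + 1) (by omega) s a) (hgle s)
  have hΦ1 : -(4 * sp ^ 2) ≤ Φ 1 := by
    rw [hΦ]
    have h1 : ∑ s, ∑ a, ν 1 s a * (-(4 * sp ^ 2)) ≤ ∑ s, ∑ a, ν 1 s a * g s :=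
      Finset.sum_le_sum fun s _ => Finset.sum_le_sum fun a _ =>
        mul_le_mul_of_nonneg_left (hgge s) (hνnn 1 le_rfl s a)
    have h2 : ∑ s, ∑ a, ν 1 s a * (-(4 * sp ^ 2)) = -(4 * sp ^ 2) := by
      have h3 : ∀ s, ∑ a, ν 1 s a * (-(4 * sp ^ 2)) = (∑ a, ν 1 s a) * (-(4 * sp ^ 2)) :=
        fun s => (Finset.sum_mul _ _ _).symm
      rw [Finset.sum_congr rfl fun s _ => h3 s, ← Finset.sum_mul, hmass 1 le_rfl, one_mul]
    linarith only [h1, h2]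
  -- per time-step bound
  have hper : ∀ t ∈ Icc 1 T, (∑ s, ∑ a, ν t s a *
      ((∑ s', P s a s' * Vstar s' ^ 2) - (∑ s', P s a s' * Vstar s') ^ 2)) ≤
      (Φ (t + 1) - Φ t) + C := by
    intro t htmem
    have ht1 : 1 ≤ t := (mem_Icc.mp htmem).1
    calc (∑ s, ∑ a, ν t s a *
        ((∑ s', P s a s' * Vstar s' ^ 2) - (∑ s', P s a s' * Vstar s') ^ 2))
        ≤ ∑ s, ∑ a, ν t s a * ((∑ s', P s a s' * g s') - g s + C) :=
          Finset.sum_le_sum fun s _ => Finset.sum_le_sum fun a _ =>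
            mul_le_mul_of_nonneg_left (hpt s a) (hνnn t ht1 s a)
      _ = (∑ s, ∑ a, ν t s a * ∑ s', P s a s' * g s') - (∑ s, ∑ a, ν t s a * g s) +
          C * (∑ s, ∑ a, ν t s a) := by
          have expand : ∀ s a, ν t s a * ((∑ s', P s a s' * g s') - g s + C) =
              ν t s a * (∑ s', P s a s' * g s') - ν t s a * g s + C * ν t s a :=
            fun s a => by ring
          rw [Finset.sum_congr rfl fun s _ => Finset.sum_congr rfl fun a _ => expand s a]
          simp only [Finset.sum_add_distrib, Finset.sum_sub_distrib, ← Finset.mul_sum]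
      _ = (Φ (t + 1) - Φ t) + C := by
          rw [hstep t ht1 g, hmass t ht1, mul_one, hΦ (t + 1), hΦ t]
  -- swap sums and conclude
  have hswap : ∑ s, ∑ a, (∑ t ∈ Icc 1 T, ν t s a) *
      ((∑ s', P s a s' * Vstar s' ^ 2) - (∑ s', P s a s' * Vstar s') ^ 2) =
      ∑ t ∈ Icc 1 T, ∑ s, ∑ a, ν t s a *
      ((∑ s', P s a s' * Vstar s' ^ 2) - (∑ s', P s a s' * Vstar s') ^ 2) := by
    calc ∑ s, ∑ a, (∑ t ∈ Icc 1 T, ν t s a) *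
          ((∑ s', P s a s' * Vstar s' ^ 2) - (∑ s', P s a s' * Vstar s') ^ 2)
        = ∑ s, ∑ a, ∑ t ∈ Icc 1 T, ν t s a *
          ((∑ s', P s a s' * Vstar s' ^ 2) - (∑ s', P s a s' * Vstar s') ^ 2) :=
          Finset.sum_congr rfl fun s _ => Finset.sum_congr rfl fun a _ =>
            Finset.sum_mul _ _ _
      _ = ∑ s, ∑ t ∈ Icc 1 T, ∑ a, ν t s a *
          ((∑ s', P s a s' * Vstar s' ^ 2) - (∑ s', P s a s' * Vstar s') ^ 2) :=
          Finset.sum_congr rfl fun s _ => Finset.sum_comm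
      _ = ∑ t ∈ Icc 1 T, ∑ s, ∑ a, ν t s a *
          ((∑ s', P s a s' * Vstar s' ^ 2) - (∑ s', P s a s' * Vstar s') ^ 2) :=
          Finset.sum_comm
  have hmain : ∑ s, ∑ a, (∑ t ∈ Icc 1 T, ν t s a) *
      ((∑ s', P s a s' * Vstar s' ^ 2) - (∑ s', P s a s' * Vstar s') ^ 2) ≤
      4 * sp ^ 2 + C * T := by
    rw [hswap]
    calc ∑ t ∈ Icc 1 T, ∑ s, ∑ a, ν t s a *
          ((∑ s', P s a s' * Vstar s' ^ 2) - (∑ s', P s a s' * Vstar s') ^ 2)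
        ≤ ∑ t ∈ Icc 1 T, ((Φ (t + 1) - Φ t) + C) := Finset.sum_le_sum hper
      _ = (Φ (T + 1) - Φ 1) + T * C := by
          rw [Finset.sum_add_distrib, telesc Φ T, Finset.sum_const, Nat.card_Icc]
          simp [nsmul_eq_mul]
      _ ≤ 4 * sp ^ 2 + C * T := by
          have hcm : (T : ℝ) * C = C * T := mul_comm _ _
          linarith only [hΦT, hΦ1, hcm]
  have hfin : 4 * sp ^ 2 + C * T ≤ 8 * sp ^ 2 + 4 * sp * T * ρ + 4 * sp ^ 2 * T * (1 - γ) := by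
    rw [← hC]
    nlinarith [sq_nonneg sp]
  linarith only [hmain, hfin]
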